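/- Let (χ, η) ∈ ℝ² with a ≤ χ + η − 1 ≤ χ ≤ b and 0 ≤ η ≤ 1, and let t ∈ ℝ with t ∉ supp(μ) and t ∉ [χ + η − 1, χ]. If e^{C(t)}·(t − χ) = t − χ − η + 1 and C′(t) + 1/(t − χ) − 1/(t − χ − η + 1) = 0, then η < 1, C(t) ≠ 0, χ = χ_E(t), and η = η_E(t). -/

import Mathlib

open MeasureTheory Complex Filter Set

noncomputable section

/-- The support of a measure on `ℝ`. -/
def msupport (μ : Measure ℝ) : Set ℝ := {x | ∀ U ∈ nhds x, μ U ≠ 0}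

/-- The real Cauchy transform `C(t) = ∫ (t - x)⁻¹ dμ(x)` at a real point. -/
def Creal (μ : Measure ℝ) (t : ℝ) : ℝ := ∫ x, (t - x)⁻¹ ∂μ

/-- `C′(t) = -∫ (t - x)⁻² dμ(x)`. -/
def Cder (μ : Measure ℝ) (t : ℝ) : ℝ := -∫ x, ((t - x) ^ 2)⁻¹ ∂μ

/-- `χ_E(t) = t + (e^{C(t)} - 1)/(e^{C(t)} C′(t))`. -/
def chiE (μ : Measure ℝ) (t : ℝ) : ℝ :=
  t + (Real.exp (Creal μ t) - 1) / (Real.exp (Creal μ t) * Cder μ t)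

/-- `η_E(t) = 1 + (e^{C(t)} - 1)²/(e^{C(t)} C′(t))`. -/
def etaE (μ : Measure ℝ) (t : ℝ) : ℝ :=
  1 + (Real.exp (Creal μ t) - 1) ^ 2 / (Real.exp (Creal μ t) * Cder μ t)

lemma msupport_isClosed (μ : Measure ℝ) : IsClosed (msupport μ) := by
  rw [← isOpen_compl_iff, isOpen_iff_mem_nhds]
  intro x hx
  simp only [msupport, mem_compl_iff, mem_setOf_eq, not_forall] at hx
  obtain ⟨U, hU, hU0⟩ := hx
  push_neg at hU0
  filter_upwards [interior_mem_nhds.2 hU] with y hy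
  simp only [msupport, mem_compl_iff, mem_setOf_eq, not_forall]
  exact ⟨interior U, isOpen_interior.mem_nhds hy, by
    push_neg
    exact measure_mono_null interior_subset hU0⟩

lemma measure_compl_msupport (μ : Measure ℝ) : μ (msupport μ)ᶜ = 0 := by
  apply measure_null_of_locally_null
  intro x hx
  simp only [msupport, mem_compl_iff, mem_setOf_eq, not_forall] at hx
  obtain ⟨U, hU, hU0⟩ := hx
  push_neg at hU0
  exact ⟨U, mem_nhdsWithin_of_mem_nhds hU, hU0⟩

lemma alg_aux (A B η E C : ℝ) (hA : A ≠ 0) (hB : B ≠ 0) (hη : η - 1 ≠ 0)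
    (hBA : B = A - η + 1) (hE : E * A = B) (hC : C + 1 / A - 1 / B = 0) :
    (E - 1) / (E * C) = -A ∧ 1 + (E - 1) ^ 2 / (E * C) = η := by
  subst hBA
  have hE' : E = (A - η + 1) / A := by field_simp; linarith
  have hC' : C = (η - 1) / (A * (A - η + 1)) := by
    have h1 : C = 1 / (A - η + 1) - 1 / A := by linarith
    rw [h1]
    field_simp
    ring
  subst hE' hC'
  constructor
  · field_simp
    ring
  · field_simp
    ring

theorem repeated_root_eq_chiE_etaE (μ : Measure ℝ) (a b : ℝ) [IsProbabilityMeasure μ]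
    (hle : μ ≤ volume) (hsupp : msupport μ ⊆ Set.Icc a b)
    (ha : a ∈ msupport μ) (hb : b ∈ msupport μ) (hab : 1 < b - a)
    (χ η t : ℝ)
    (h1 : a ≤ χ + η - 1) (h2 : χ + η - 1 ≤ χ) (h3 : χ ≤ b) (h4 : 0 ≤ η) (h5 : η ≤ 1)
    (ht : t ∉ msupport μ) (ht' : t ∉ Set.Icc (χ + η - 1) χ)
    (e1 : Real.exp (Creal μ t) * (t - χ) = t - χ - η + 1)
    (e2 : Cder μ t + 1 / (t - χ) - 1 / (t - χ - η + 1) = 0) :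
    η < 1 ∧ Creal μ t ≠ 0 ∧ χ = chiE μ t ∧ η = etaE μ t := by
  -- Setup: distance from t to the support
  set S := msupport μ with hS
  have hSc : IsClosed S := msupport_isClosed μ
  have hSne : S.Nonempty := ⟨a, ha⟩
  set d := Metric.infDist t S with hdd
  have hd : 0 < d := (hSc.notMem_iff_infDist_pos hSne).1 ht
  -- Integrability of ((t-x)^2)⁻¹
  set f : ℝ → ℝ := fun x => ((t - x) ^ 2)⁻¹ with hf
  have hmeas : Measurable f := ((measurable_const.sub measurable_id).pow_const 2).inv
  have haeS : ∀ᵐ x ∂μ, x ∈ S := by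
    have := measure_compl_msupport μ
    rw [ae_iff]
    exact this
  have hbound : ∀ᵐ x ∂μ, ‖f x‖ ≤ (d ^ 2)⁻¹ := by
    filter_upwards [haeS] with x hx
    have hdx : d ≤ |t - x| := by
      have := Metric.infDist_le_dist_of_mem (x := t) hx
      rwa [Real.dist_eq] at this
    have h2 : d ^ 2 ≤ (t - x) ^ 2 := by
      calc d ^ 2 ≤ |t - x| ^ 2 := by nlinarith [hd, hdx, abs_nonneg (t - x)]
        _ = (t - x) ^ 2 := sq_abs _
    have hpos : (0:ℝ) < d ^ 2 := by positivity
    rw [Real.norm_eq_abs, _root_.abs_of_nonneg (by positivity : (0:ℝ) ≤ f x)]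
    exact inv_anti₀ hpos h2
  have hint : Integrable f μ :=
    (integrable_const ((d ^ 2)⁻¹)).mono' hmeas.aestronglyMeasurable hbound
  -- μ {t} = 0 and positivity of the integral
  have hμt : μ {t} = 0 := by
    have := hle {t}
    simpa [Real.volume_singleton] using le_antisymm (by simpa using this) zero_le
  have hsupf : Function.support f = {t}ᶜ := by
    ext x
    simp only [Function.mem_support, hf, mem_compl_iff, mem_singleton_iff]
    constructor
    · intro h hxt
      exact h (by rw [hxt]; simp)
    · intro hxt
      have hx0 : t - x ≠ 0 := fun h => hxt (by linarith)
      positivity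
  have hpos : 0 < ∫ x, f x ∂μ := by
    rw [integral_pos_iff_support_of_nonneg (fun x => by positivity) hint]
    rw [hsupf, measure_compl (measurableSet_singleton t) (measure_ne_top μ _), hμt]
    simp
  have hCder : Cder μ t < 0 := by
    rw [Cder]; linarith [hpos]
  -- Algebra
  have hAB : t - χ ≠ 0 ∧ t - χ - η + 1 ≠ 0 := by
    rw [Set.mem_Icc, not_and_or] at ht'
    push_neg at ht'
    rcases ht' with h | h
    · constructor <;> nlinarith
    · constructor <;> nlinarith
  obtain ⟨hA0, hB0⟩ := hAB
  have hη1 : η ≠ 1 := by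
    intro h
    have hBA : t - χ - η + 1 = t - χ := by rw [h]; ring
    rw [hBA] at e2
    have : Cder μ t = 0 := by linarith
    linarith
  have hη1' : η - 1 ≠ 0 := fun h => hη1 (by linarith)
  have hηlt : η < 1 := lt_of_le_of_ne h5 hη1
  have hC0 : Creal μ t ≠ 0 := by
    intro h
    rw [h, Real.exp_zero, one_mul] at e1
    exact hη1 (by linarith)
  have halg := alg_aux (t - χ) (t - χ - η + 1) η (Real.exp (Creal μ t)) (Cder μ t)
    hA0 hB0 hη1' (by ring) e1 e2
  refine ⟨hηlt, hC0, ?_, ?_⟩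
  · rw [chiE, halg.1]; ring
  · rw [etaE]; exact halg.2.symm
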